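/- Let $f : \mathbb{R}^m \to \mathbb{R}$ be concave and differentiable, $\tau_j \ge 0$, and define $Q(\theta) = f(\theta) - \sum_{j=1}^d \tau_j \|\theta_j\|$ where $\theta = (\theta_1^\top,\dots,\theta_d^\top)^\top$. If $\hat\theta$ maximises $Q$ over the subspace $S = \{\theta : \theta_j = 0 \text{ for } j \in J\}$ for some index set $J$, and additionally $\|\nabla_{\theta_j} f(\hat\theta)\| < \tau_j$ for every $j \in J$, then $\hat\theta$ is a global maximiser of $Q$ over all of $\mathbb{R}^m$. -/

import Mathlib

noncomputable def vnorm {n : ℕ} (x : Fin n → ℝ) : ℝ := Real.sqrt (∑ i, x i ^ 2)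

lemma vnorm_eq_norm {n : ℕ} (x : Fin n → ℝ) :
    vnorm x = ‖(WithLp.equiv 2 (Fin n → ℝ)).symm x‖ := by
  rw [EuclideanSpace.norm_eq]
  simp [vnorm, sq_abs, Real.norm_eq_abs]

lemma vnorm_nonneg {n : ℕ} (x : Fin n → ℝ) : 0 ≤ vnorm x := Real.sqrt_nonneg _

lemma vnorm_zero {n : ℕ} : vnorm (0 : Fin n → ℝ) = 0 := by simp [vnorm]

lemma vnorm_smul {n : ℕ} (c : ℝ) (x : Fin n → ℝ) : vnorm (c • x) = |c| * vnorm x := by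
  rw [vnorm_eq_norm, vnorm_eq_norm,
    show (WithLp.equiv 2 (Fin n → ℝ)).symm (c • x)
      = c • (WithLp.equiv 2 (Fin n → ℝ)).symm x from rfl, norm_smul]
  simp [Real.norm_eq_abs]

lemma vnorm_add_le {n : ℕ} (x y : Fin n → ℝ) : vnorm (x + y) ≤ vnorm x + vnorm y := by
  rw [vnorm_eq_norm, vnorm_eq_norm, vnorm_eq_norm,
    show (WithLp.equiv 2 (Fin n → ℝ)).symm (x + y)
      = (WithLp.equiv 2 (Fin n → ℝ)).symm x + (WithLp.equiv 2 (Fin n → ℝ)).symm y from rfl]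
  exact norm_add_le _ _

lemma sum_mul_le_vnorm {n : ℕ} (a b : Fin n → ℝ) :
    ∑ i, a i * b i ≤ vnorm a * vnorm b := by
  have h := real_inner_le_norm ((WithLp.equiv 2 (Fin n → ℝ)).symm a)
    ((WithLp.equiv 2 (Fin n → ℝ)).symm b)
  rw [vnorm_eq_norm, vnorm_eq_norm]
  refine le_trans (le_of_eq ?_) h
  rw [PiLp.inner_apply]
  simp [RCLike.inner_apply]
  exact Finset.sum_congr rfl fun i _ => mul_comm _ _

open Filter Set
lemma dirDeriv_le {E : Type*} [NormedAddCommGroup E] [NormedSpace ℝ E]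
    {f : E → ℝ} (hfd : Differentiable ℝ f) (x u : E) (C : ℝ)
    (h : ∀ t : ℝ, 0 < t → t ≤ 1 → f (x + t • u) - f x ≤ t * C) :
    fderiv ℝ f x u ≤ C := by
  have hline : HasDerivAt (fun t : ℝ => x + t • u) u 0 := by
    simpa using ((hasDerivAt_id (0 : ℝ)).smul_const u).const_add x
  have hg : HasDerivAt (fun t : ℝ => f (x + t • u)) (fderiv ℝ f x u) 0 := by
    have := (hfd (x + (0 : ℝ) • u)).hasFDerivAt.comp_hasDerivAt 0 hline
    simp only [zero_smul, add_zero] at this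
    exact this
  have htend := hasDerivAt_iff_tendsto_slope.mp hg
  have htend' : Tendsto (slope (fun t : ℝ => f (x + t • u)) 0)
      (nhdsWithin 0 (Set.Ioi 0)) (nhds (fderiv ℝ f x u)) :=
    htend.mono_left (nhdsWithin_mono _ (fun t ht => ne_of_gt ht))
  refine le_of_tendsto htend' ?_
  filter_upwards [Ioc_mem_nhdsGT_of_mem (by constructor <;> norm_num : (0:ℝ) ∈ Set.Ico 0 1)]
    with t ht
  obtain ⟨ht0, ht1⟩ := ht
  have : slope (fun t : ℝ => f (x + t • u)) 0 t
      = (f (x + t • u) - f x) / t := by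
    simp [slope, div_eq_inv_mul]
  rw [this, div_le_iff₀ ht0]
  calc f (x + t • u) - f x ≤ t * C := h t ht0 ht1
    _ = C * t := by ring

lemma dirDeriv_ge {E : Type*} [NormedAddCommGroup E] [NormedSpace ℝ E]
    {f : E → ℝ} (hfd : Differentiable ℝ f) (x u : E) (C : ℝ)
    (h : ∀ t : ℝ, 0 < t → t ≤ 1 → t * C ≤ f (x + t • u) - f x) :
    C ≤ fderiv ℝ f x u := by
  have hneg : fderiv ℝ f x u = -(fderiv ℝ (fun y => -f y) x u) := by
    rw [fderiv_fun_neg]; simp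
  rw [hneg, le_neg]
  apply dirDeriv_le hfd.neg x u (-C)
  intro t ht0 ht1
  have := h t ht0 ht1
  show -f (x + t • u) - -f x ≤ t * -C
  linarith

lemma concave_le_tangent {E : Type*} [NormedAddCommGroup E] [NormedSpace ℝ E]
    {f : E → ℝ} (hf : ConcaveOn ℝ Set.univ f) (hfd : Differentiable ℝ f)
    (x y : E) : f y ≤ f x + fderiv ℝ f x (y - x) := by
  have key := dirDeriv_ge hfd x (y - x) (f y - f x) ?_
  · linarith
  intro t ht0 ht1
  have hc := hf.2 (Set.mem_univ x) (Set.mem_univ y)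
    (by linarith : (0:ℝ) ≤ 1 - t) ht0.le (by ring)
  have heq : (1 - t) • x + t • y = x + t • (y - x) := by module
  rw [heq] at hc
  have : (1 - t) * f x + t * f y ≤ f (x + t • (y - x)) := by
    simpa [smul_eq_mul] using hc
  nlinarith

/-- If `θ̂` maximises the group-penalised concave objective `Q = f - ∑_j τ_j‖θ_j‖`
over the subspace where the blocks in `J` vanish, and the block gradients of `f`
at `θ̂` over `J` are strictly dually feasible, then `θ̂` is a global maximiser. -/
theorem sparse_maximiser_is_global (d n : ℕ) (f : (Fin d → Fin n → ℝ) → ℝ)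
    (hf : ConcaveOn ℝ Set.univ f) (hfd : Differentiable ℝ f)
    (τ : Fin d → ℝ) (hτ : ∀ j, 0 ≤ τ j)
    (Q : (Fin d → Fin n → ℝ) → ℝ)
    (hQ : ∀ θ, Q θ = f θ - ∑ j, τ j * vnorm (θ j))
    (J : Finset (Fin d)) (θhat : Fin d → Fin n → ℝ)
    (hθJ : ∀ j ∈ J, θhat j = 0)
    (hmax : ∀ θ : Fin d → Fin n → ℝ, (∀ j ∈ J, θ j = 0) → Q θ ≤ Q θhat)
    (hdual : ∀ j ∈ J,
      vnorm (fun i => fderiv ℝ f θhat (Pi.single j (Pi.single i (1:ℝ)))) < τ j) :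
    ∀ θ, Q θ ≤ Q θhat := by
  classical
  intro θ
  set L := fderiv ℝ f θhat with hL
  set g : Fin d → Fin n → ℝ := fun j i => L (Pi.single j (Pi.single i 1)) with hgdef
  -- linear functional as a sum over coordinates
  have hLsum : ∀ u : Fin d → Fin n → ℝ, L u = ∑ j, ∑ i, u j i * g j i := by
    intro u
    have hu : u = ∑ j, ∑ i, u j i • (Pi.single j (Pi.single i (1:ℝ)) : Fin d → Fin n → ℝ) := by
      funext a b
      simp only [Finset.sum_apply, Pi.smul_apply, Pi.single_apply, smul_eq_mul]
      rw [Finset.sum_eq_single a]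
      · rw [Finset.sum_eq_single b]
        · simp
        · intro i _ hi; simp [hi]
        · simp
      · intro j _ hj; simp [Ne.symm hj]
      · simp
    conv_lhs => rw [hu]
    rw [map_sum]
    refine Finset.sum_congr rfl fun j _ => ?_
    rw [map_sum]
    refine Finset.sum_congr rfl fun i _ => ?_
    rw [map_smul, smul_eq_mul]
  set ψ : Fin d → Fin n → ℝ := fun j => if j ∈ J then 0 else θ j with hψ
  set u : Fin d → Fin n → ℝ := ψ - θhat with hu
  have huJ : ∀ j ∈ J, u j = 0 := by
    intro j hj; simp [hu, hψ, hj, hθJ j hj]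
  -- Step 1 : first-order condition on the subspace
  have step1 : L u ≤ ∑ j, τ j * vnorm (ψ j) - ∑ j, τ j * vnorm (θhat j) := by
    apply dirDeriv_le hfd θhat u
    intro t ht0 ht1
    have hzero : ∀ j ∈ J, (θhat + t • u) j = 0 := by
      intro j hj; simp [hθJ j hj, huJ j hj]
    have hQle := hmax (θhat + t • u) hzero
    rw [hQ, hQ] at hQle
    have hblock : ∀ j, vnorm ((θhat + t • u) j)
        ≤ (1 - t) * vnorm (θhat j) + t * vnorm (ψ j) := by
      intro j
      have hdec : (θhat + t • u) j = (1 - t) • θhat j + t • ψ j := by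
        have : u j = ψ j - θhat j := by simp [hu]
        funext i
        simp [this, smul_eq_mul]
        ring
      rw [hdec]
      calc vnorm ((1 - t) • θhat j + t • ψ j)
          ≤ vnorm ((1 - t) • θhat j) + vnorm (t • ψ j) := vnorm_add_le _ _
        _ = (1 - t) * vnorm (θhat j) + t * vnorm (ψ j) := by
            rw [vnorm_smul, vnorm_smul, abs_of_nonneg (by linarith), abs_of_nonneg ht0.le]
    have hsum : ∑ j, τ j * vnorm ((θhat + t • u) j)
        ≤ (1 - t) * ∑ j, τ j * vnorm (θhat j) + t * ∑ j, τ j * vnorm (ψ j) := by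
      rw [Finset.mul_sum, Finset.mul_sum, ← Finset.sum_add_distrib]
      refine Finset.sum_le_sum fun j _ => ?_
      have := mul_le_mul_of_nonneg_left (hblock j) (hτ j)
      nlinarith [this]
    linarith
  -- Step 2 : dual feasibility controls the J-blocks
  set v : Fin d → Fin n → ℝ := θ - ψ with hv
  have step2 : L v ≤ ∑ j, τ j * vnorm (θ j) - ∑ j, τ j * vnorm (ψ j) := by
    rw [hLsum]
    have hterm : ∀ j, ∑ i, v j i * g j i ≤ τ j * vnorm (θ j) - τ j * vnorm (ψ j) := by
      intro j
      by_cases hj : j ∈ J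
      · have hψj : ψ j = 0 := by simp [hψ, hj]
        have hvj : v j = θ j := by simp [hv, hψj]
        calc ∑ i, v j i * g j i ≤ vnorm (v j) * vnorm (g j) := sum_mul_le_vnorm _ _
          _ ≤ vnorm (v j) * τ j := by
              have := (hdual j hj).le
              exact mul_le_mul_of_nonneg_left this (vnorm_nonneg _)
          _ = τ j * vnorm (θ j) - τ j * vnorm (ψ j) := by
              rw [hvj, hψj, vnorm_zero]; ring
      · have hψj : ψ j = θ j := by simp [hψ, hj]
        have hvj : v j = 0 := by simp [hv, hψj]
        simp [hvj, hψj]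
    calc ∑ j, ∑ i, v j i * g j i ≤ ∑ j, (τ j * vnorm (θ j) - τ j * vnorm (ψ j)) :=
          Finset.sum_le_sum fun j _ => hterm j
      _ = _ := by rw [Finset.sum_sub_distrib]
  -- combine
  have htan := concave_le_tangent hf hfd θhat θ
  have hdecomp : θ - θhat = u + v := by
    simp [hu, hv]
  rw [hdecomp, ← hL, map_add] at htan
  rw [hQ, hQ]
  linarith
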